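/- For every $L > 0$, the function $u(t) = e^{2\pi t / L} \cos^2(t)$ is strictly increasing on the interval $[-h(L), h(L)]$, where $h(L) = \arccos(\tanh(L/2))$. -/

import Mathlib

open Real

/-- For every `L > 0`, the function `u(t) = e^{2πt/L} cos²(t)` is strictly increasing
on `[-h(L), h(L)]`, where `h(L) = arccos(tanh(L/2))`. -/
theorem strictMonoOn_exp_mul_cos_sq (L : ℝ) (hL : 0 < L) :
    StrictMonoOn (fun t : ℝ => Real.exp (2 * π * t / L) * Real.cos t ^ 2)
      (Set.Icc (-(Real.arccos (Real.tanh (L / 2)))) (Real.arccos (Real.tanh (L / 2)))) := by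
  set h : ℝ := Real.arccos (Real.tanh (L / 2)) with hh
  have hL2 : 0 < L / 2 := by linarith
  have hsinh : 0 < Real.sinh (L / 2) := Real.sinh_pos_iff.mpr hL2
  have hcoshp : 0 < Real.cosh (L / 2) := Real.cosh_pos _
  have htanh0 : 0 < Real.tanh (L / 2) := by
    rw [Real.tanh_eq_sinh_div_cosh]; positivity
  have htanh1 : Real.tanh (L / 2) < 1 := by
    rw [Real.tanh_eq_sinh_div_cosh, div_lt_one hcoshp]
    exact Real.sinh_lt_cosh _
  have hh_pos : 0 < h := Real.arccos_pos.mpr htanh1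
  have hh_lt : h < π / 2 := Real.arccos_lt_pi_div_two.mpr htanh0
  have hcos_h : Real.cos h = Real.tanh (L / 2) :=
    Real.cos_arccos (by linarith) htanh1.le
  have hsin_h : Real.sin h = 1 / Real.cosh (L / 2) := by
    rw [hh, Real.sin_arccos]
    have key : 1 - Real.tanh (L / 2) ^ 2 = (1 / Real.cosh (L / 2)) ^ 2 := by
      rw [Real.tanh_eq_sinh_div_cosh]
      field_simp
      linarith [Real.cosh_sq (L / 2)]
    rw [key, Real.sqrt_sq (by positivity)]
  have htan_h : Real.tan h = 1 / Real.sinh (L / 2) := by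
    rw [Real.tan_eq_sin_div_cos, hsin_h, hcos_h, Real.tanh_eq_sinh_div_cosh]
    field_simp
  have hpi : (2 : ℝ) < π := by linarith [Real.pi_gt_three]
  apply strictMonoOn_of_deriv_pos (convex_Icc _ _)
  · exact ((Real.continuous_exp.comp (by continuity)).mul
      ((Real.continuous_cos.pow 2))).continuousOn
  · intro x hx
    rw [interior_Icc] at hx
    obtain ⟨hx1, hx2⟩ := hx
    have hcosx : 0 < Real.cos x := by
      apply Real.cos_pos_of_mem_Ioo
      constructor <;> [linarith; linarith]
    have hexp : 0 < Real.exp (2 * π * x / L) := Real.exp_pos _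
    -- key inequality: sin x < (π / L) * cos x
    have hkey : Real.sin x < π / L * Real.cos x := by
      rcases le_or_gt x 0 with hx0 | hx0
      · have hs : Real.sin x ≤ 0 := by
          apply Real.sin_nonpos_of_nonpos_of_neg_pi_le hx0
          nlinarith [Real.pi_pos]
        have : 0 < π / L * Real.cos x := by positivity
        linarith
      · have ht : Real.tan x < Real.tan h :=
          Real.tan_lt_tan_of_nonneg_of_lt_pi_div_two hx0.le hh_lt hx2
        rw [htan_h] at ht
        have h1 : (1 : ℝ) / Real.sinh (L / 2) ≤ 2 / L := by
          rw [div_le_div_iff₀ hsinh hL]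
          nlinarith [Real.self_lt_sinh_iff.mpr hL2]
        have h2 : (1 : ℝ) / Real.sinh (L / 2) ≤ π / L := h1.trans (by gcongr)
        rw [Real.tan_eq_sin_div_cos, div_lt_iff₀ hcosx] at ht
        exact ht.trans_le (mul_le_mul_of_nonneg_right h2 hcosx.le)
    -- compute the derivative
    have hd : HasDerivAt (fun t : ℝ => Real.exp (2 * π * t / L) * Real.cos t ^ 2)
        (2 * π / L * Real.exp (2 * π * x / L) * Real.cos x ^ 2
          + Real.exp (2 * π * x / L) * (2 * Real.cos x ^ 1 * (-Real.sin x))) x := by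
      have h1 : HasDerivAt (fun t : ℝ => Real.exp (2 * π * t / L))
          (2 * π / L * Real.exp (2 * π * x / L)) x := by
        have heq : (fun t : ℝ => Real.exp (2 * π * t / L))
            = fun t : ℝ => Real.exp (2 * π / L * t) := by
          funext t; congr 1; ring
        have h1' : HasDerivAt (fun t : ℝ => Real.exp (2 * π / L * t))
            (Real.exp (2 * π / L * x) * (2 * π / L)) x := by
          simpa using ((hasDerivAt_id x).const_mul (2 * π / L)).exp
        rw [heq, show 2 * π * x / L = 2 * π / L * x by ring,
          mul_comm (2 * π / L) (Real.exp (2 * π / L * x))]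
        exact h1'
      have h2 : HasDerivAt (fun t : ℝ => Real.cos t ^ 2)
          (2 * Real.cos x ^ 1 * (-Real.sin x)) x := by
        simpa using (Real.hasDerivAt_cos x).fun_pow 2
      exact h1.mul h2
    rw [hd.deriv]
    have : 2 * π / L * Real.exp (2 * π * x / L) * Real.cos x ^ 2
          + Real.exp (2 * π * x / L) * (2 * Real.cos x ^ 1 * (-Real.sin x))
        = 2 * Real.exp (2 * π * x / L) * Real.cos x * (π / L * Real.cos x - Real.sin x) := by
      ring
    rw [this]
    have : 0 < π / L * Real.cos x - Real.sin x := by linarith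
    positivity
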